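/- For any graph Γ = (V,R), the Frattini subgroup of the profinite group G_Γ is trivial: Φ(G_Γ) = 1. -/

import Mathlib

open Function

noncomputable section

/-- A discrete group is a topological group. -/
instance (priority := 50) discreteTopologicalGroup (G : Type*) [Group G] [TopologicalSpace G]
    [DiscreteTopology G] : IsTopologicalGroup G where
  continuous_mul := continuous_of_discreteTopology
  continuous_inv := continuous_of_discreteTopology

/-- The sign epimorphism `τ : D_p → C_2 = {±1}` killing the rotations. -/
def dihedralSign (p : ℕ) : DihedralGroup p →* ℤˣ where
  toFun x := match x with
    | DihedralGroup.r _ => 1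
    | DihedralGroup.sr _ => -1
  map_one' := rfl
  map_mul' a b := by cases a <;> cases b <;> rfl

/-- `{±1}` acts on a commutative group by exponentiation (i.e. `-1` acts by inversion). -/
def unitsIntAut (A : Type*) [CommGroup A] : ℤˣ →* MulAut A where
  toFun u :=
    { toFun := fun x => x ^ (u : ℤ)
      invFun := fun x => x ^ (u : ℤ)
      left_inv := fun x => by rcases Int.units_eq_one_or u with h | h <;> simp [h]
      right_inv := fun x => by rcases Int.units_eq_one_or u with h | h <;> simp [h]
      map_mul' := fun x y => mul_zpow x y _ }
  map_one' := by ext x; simp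
  map_mul' u v := by
    ext x
    rcases Int.units_eq_one_or u with h | h <;>
      rcases Int.units_eq_one_or v with h' | h' <;>
        simp [h, h']

/-- The action of `D_p × D_p` on `C_q` given by `(x,y) · g = g^(τ(x)τ(y))`. -/
def Wact (p q : ℕ) : DihedralGroup p × DihedralGroup p →* MulAut (Multiplicative (ZMod q)) :=
  (unitsIntAut (Multiplicative (ZMod q))).comp
    (((dihedralSign p).comp (MonoidHom.fst _ _)) * ((dihedralSign p).comp (MonoidHom.snd _ _)))

/-- The group `W = C_q ⋊ (D_p × D_p)`. -/
abbrev Wgrp (p q : ℕ) : Type :=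
  SemidirectProduct (Multiplicative (ZMod q)) (DihedralGroup p × DihedralGroup p) (Wact p q)

/-- The quotient map `λ : W → D_p × D_p`. -/
abbrev lamW (p q : ℕ) : Wgrp p q →* DihedralGroup p × DihedralGroup p :=
  SemidirectProduct.rightHom

/-- The group `G_Γ ≤ D_p^V × W^R` associated to a graph `Γ = (V, R)`. -/
def GGamma (p q : ℕ) (V : Type*) (R : Set (V × V)) :
    Subgroup ((V → DihedralGroup p) × (R → Wgrp p q)) where
  carrier := {x | ∀ r : R,
    SemidirectProduct.rightHom (x.2 r) = (x.1 (r : V × V).1, x.1 (r : V × V).2)}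
  one_mem' := by intro r; simp; rfl
  mul_mem' := by
    intro a b ha hb r
    simp only [Set.mem_setOf_eq] at ha hb
    simp only [Prod.snd_mul, Pi.mul_apply, map_mul, Prod.fst_mul, ha r, hb r, Prod.mk_mul_mk]
  inv_mem' := by
    intro a ha r
    simp only [Set.mem_setOf_eq] at ha
    simp only [Prod.snd_inv, Pi.inv_apply, map_inv, Prod.fst_inv, ha r, Prod.inv_mk]

instance (n : ℕ) : TopologicalSpace (DihedralGroup n) := ⊥
instance (n : ℕ) : DiscreteTopology (DihedralGroup n) := ⟨rfl⟩
instance (p q : ℕ) : TopologicalSpace (Wgrp p q) := ⊥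
instance (p q : ℕ) : DiscreteTopology (Wgrp p q) := ⟨rfl⟩

variable (p q : ℕ) (V : Type*) (R : Set (V × V))

/-- The coordinate projection `π_v : G_Γ → D_p` at a vertex `v`. -/
def vProj (v : V) : ↥(GGamma p q V R) →* DihedralGroup p :=
  (Pi.evalMonoidHom (fun _ : V => DihedralGroup p) v).comp
    ((MonoidHom.fst _ _).comp (GGamma p q V R).subtype)

/-- The coordinate projection `π_r : G_Γ → W` at an edge `r`. -/
def eProj (r : R) : ↥(GGamma p q V R) →* Wgrp p q :=
  (Pi.evalMonoidHom (fun _ : R => Wgrp p q) r).comp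
    ((MonoidHom.snd _ _).comp (GGamma p q V R).subtype)

variable (I : Type*)

/-- The coordinate projection `π_v : G_Γ × C_2^I → D_p` at a vertex `v`. -/
def vProjK (v : V) : (↥(GGamma p q V R) × (I → ℤˣ)) →* DihedralGroup p :=
  (vProj p q V R v).comp (MonoidHom.fst _ _)

/-- The coordinate projection `π_r : G_Γ × C_2^I → W` at an edge `r`. -/
def eProjK (r : R) : (↥(GGamma p q V R) × (I → ℤˣ)) →* Wgrp p q :=
  (eProj p q V R r).comp (MonoidHom.fst _ _)

/-- The map `ξ_Γ : G_Γ → C_2^V`, `((a_v), (b_r)) ↦ (τ(a_v))_v`. -/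
def xiGamma : ↥(GGamma p q V R) →* (V → ℤˣ) :=
  Pi.monoidHom fun v => (dihedralSign p).comp (vProj p q V R v)

end

open Function

noncomputable section

/-- The Frattini subgroup of a topological group: the intersection of all maximal open
subgroups. -/
def frattiniOpen (G : Type*) [Group G] [TopologicalSpace G] : Subgroup G :=
  ⨅ M ∈ {M : Subgroup G | IsOpen (M : Set G) ∧ IsCoatom M}, M

/-- A Frattini cover: a continuous epimorphism whose kernel is contained in the Frattini
subgroup of the source. -/
def IsFrattiniCover {H G : Type*} [Group H] [TopologicalSpace H] [Group G] [TopologicalSpace G]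
    (φ : H →* G) : Prop :=
  Continuous φ ∧ Surjective φ ∧ φ.ker ≤ frattiniOpen H

/-- A universal Frattini cover: a Frattini cover through which every Frattini cover by a
profinite group factors via a continuous epimorphism. -/
def IsUniversalFrattiniCover {tG G : Type*} [Group tG] [TopologicalSpace tG] [Group G]
    [TopologicalSpace G] (φt : tG →* G) : Prop :=
  IsFrattiniCover φt ∧
    ∀ (H : Type) [Group H] [TopologicalSpace H] [IsTopologicalGroup H] [CompactSpace H]
      [T2Space H] [TotallyDisconnectedSpace H] (β : H →* G), IsFrattiniCover β →
        ∃ γ : tG →* H, Continuous γ ∧ Surjective γ ∧ β.comp γ = φt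

/-- A topological group is pro-`ℓ` if each of its continuous finite quotients is an
`ℓ`-group. -/
def IsProL (ℓ : ℕ) (H : Type*) [Group H] [TopologicalSpace H] : Prop :=
  ∀ (Q : Type) [Group Q] [Finite Q] (φ : H →* Q),
    Surjective φ → IsOpen (φ.ker : Set H) → IsPGroup ℓ Q

end

section Aux

open Subgroup

/-- A subgroup of prime index is a coatom. -/
theorem isCoatom_of_index_prime' {G : Type*} [Group G] {H : Subgroup G}
    (h : H.index.Prime) : IsCoatom H := by
  constructor
  · intro htop
    rw [htop, Subgroup.index_top] at h
    exact h.one_lt.ne' rfl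
  · intro K hK
    have hle : H ≤ K := hK.le
    have hmul := Subgroup.relIndex_mul_index hle
    have hdvd : K.index ∣ H.index := ⟨H.relIndex K, by rw [mul_comm]; exact hmul.symm⟩
    rcases h.eq_one_or_self_of_dvd _ hdvd with h1 | h2
    · exact Subgroup.index_eq_one.mp h1
    · exfalso
      have hrel : H.relIndex K = 1 := by
        have h3 := hmul
        rw [h2] at h3
        exact Nat.eq_of_mul_eq_mul_right h.pos (h3.trans (one_mul _).symm)
      exact hK.not_ge (Subgroup.relIndex_eq_one.mp hrel)

/-- The open-Frattini subgroup is contained in the preimage of any prime-index subgroup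
of a discrete target under a continuous surjective homomorphism. -/
theorem frattiniOpen_le_comap {G F : Type*} [Group G] [TopologicalSpace G]
    [Group F] [TopologicalSpace F] [DiscreteTopology F] (φ : G →* F)
    (hc : Continuous φ) (hs : Function.Surjective φ) {N : Subgroup F}
    (hN : N.index.Prime) : frattiniOpen G ≤ N.comap φ := by
  have hidx : (N.comap φ).index = N.index := Subgroup.index_comap_of_surjective N hs
  have hcoatom : IsCoatom (N.comap φ) := isCoatom_of_index_prime' (by rwa [hidx])
  have hopen : IsOpen ((N.comap φ : Subgroup G) : Set G) := by
    have : ((N.comap φ : Subgroup G) : Set G) = φ ⁻¹' (N : Set F) := rfl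
    rw [this]
    exact (isOpen_discrete _).preimage hc
  exact biInf_le _ ⟨hopen, hcoatom⟩

end Aux


theorem statement_5 (p q : ℕ) (hp : p.Prime) (hq : q.Prime) (hpo : Odd p) (hqo : Odd q)
    (hpq : p ≠ q) (V : Type) (R : Set (V × V))
    (hloop : ∀ v : V, (v, v) ∉ R) (hor : ∀ a b : V, (a, b) ∈ R → (b, a) ∉ R) :
    frattiniOpen ↥(GGamma p q V R) = ⊥ := by
  classical
  -- index computations
  have hker_idx : ((dihedralSign p).ker.index) = 2 := by
    rw [Subgroup.index_ker]
    have hrange : (dihedralSign p).range = ⊤ := by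
      rw [eq_top_iff]
      intro u _
      rcases Int.units_eq_one_or u with h | h
      · exact ⟨1, by rw [map_one, h]⟩
      · exact ⟨DihedralGroup.sr 0, by rw [h]; rfl⟩
    rw [hrange, Subgroup.card_top, Nat.card_eq_fintype_card, Fintype.card_units_int]
  have hS0_idx : (Subgroup.zpowers (DihedralGroup.sr 0 : DihedralGroup p)).index = p := by
    have hcard : Nat.card (Subgroup.zpowers (DihedralGroup.sr 0 : DihedralGroup p)) = 2 := by
      rw [Nat.card_zpowers, DihedralGroup.orderOf_sr]
    have hmi := Subgroup.card_mul_index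
      (H := Subgroup.zpowers (DihedralGroup.sr 0 : DihedralGroup p))
    rw [hcard, DihedralGroup.nat_card] at hmi
    exact Nat.eq_of_mul_eq_mul_left (by norm_num) hmi
  have hWcard : Nat.card (Wgrp p q) = q * (2 * p * (2 * p)) := by
    have e : Wgrp p q ≃ (Multiplicative (ZMod q)) × (DihedralGroup p × DihedralGroup p) :=
      ⟨fun x => (x.left, x.right), fun z => ⟨z.1, z.2⟩, fun x => rfl, fun z => rfl⟩
    rw [Nat.card_congr e, Nat.card_prod, Nat.card_prod, DihedralGroup.nat_card,
      Nat.card_congr Multiplicative.toAdd, Nat.card_zmod]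
  have hinr_idx :
      ((SemidirectProduct.inr : (DihedralGroup p × DihedralGroup p) →* Wgrp p q).range).index
        = q := by
    have e2 : (DihedralGroup p × DihedralGroup p) ≃
        ((SemidirectProduct.inr : (DihedralGroup p × DihedralGroup p) →* Wgrp p q).range) :=
      Equiv.ofBijective (fun g => ⟨SemidirectProduct.inr g, ⟨g, rfl⟩⟩)
        ⟨fun a b hab => SemidirectProduct.inr_injective (congrArg Subtype.val hab),
         by rintro ⟨x, g, rfl⟩; exact ⟨g, rfl⟩⟩
    have hcr : Nat.card
        ((SemidirectProduct.inr : (DihedralGroup p × DihedralGroup p) →* Wgrp p q).range)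
          = 2 * p * (2 * p) := by
      rw [← Nat.card_congr e2, Nat.card_prod, DihedralGroup.nat_card]
    have hmi := Subgroup.card_mul_index
      (H := (SemidirectProduct.inr : (DihedralGroup p × DihedralGroup p) →* Wgrp p q).range)
    rw [hcr, hWcard, mul_comm q (2 * p * (2 * p))] at hmi
    have hpos : 0 < 2 * p * (2 * p) := by
      have := hp.pos; positivity
    exact Nat.eq_of_mul_eq_mul_left hpos hmi
  -- excluding rotations from the order-2 subgroup
  have hzp : ∀ i : ZMod p,
      DihedralGroup.r i ∈ Subgroup.zpowers (DihedralGroup.sr 0 : DihedralGroup p) → i = 0 := by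
    intro i hi
    rw [Subgroup.mem_zpowers_iff] at hi
    obtain ⟨n, hn⟩ := hi
    have hsq : (DihedralGroup.sr 0 : DihedralGroup p) ^ (2 : ℤ) = 1 := by
      have h2 : (DihedralGroup.sr 0 : DihedralGroup p) ^ (2 : ℕ) = 1 := by
        rw [pow_two, DihedralGroup.sr_mul_self]
      rw [show (2 : ℤ) = ((2 : ℕ) : ℤ) from rfl, zpow_natCast, h2]
    rcases Int.even_or_odd n with ⟨k, hk⟩ | ⟨k, hk⟩
    · rw [hk, show k + k = 2 * k by ring, zpow_mul, hsq, one_zpow] at hn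
      rw [DihedralGroup.one_def] at hn
      injection hn with h
      exact h.symm
    · rw [hk, zpow_add, zpow_mul, hsq, one_zpow, zpow_one, one_mul] at hn
      simp at hn
  -- continuity of the projections
  have hvc : ∀ v, Continuous (vProj p q V R v) := fun v =>
    (continuous_apply v).comp (continuous_fst.comp continuous_subtype_val)
  have hec : ∀ r : R, Continuous (eProj p q V R r) := fun r =>
    (continuous_apply r).comp (continuous_snd.comp continuous_subtype_val)
  -- surjectivity of the projections
  have hvs : ∀ v, Function.Surjective (vProj p q V R v) := by
    intro v a
    refine ⟨⟨(fun w => if w = v then a else 1,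
        fun r => SemidirectProduct.inr
          (if (r : V × V).1 = v then a else 1, if (r : V × V).2 = v then a else 1)), ?_⟩, ?_⟩
    · intro r
      rw [SemidirectProduct.rightHom_inr]
    · show (if v = v then a else 1) = a
      rw [if_pos rfl]
  have hes : ∀ r0 : R, Function.Surjective (eProj p q V R r0) := by
    intro r0 w
    have hne : (r0 : V × V).2 ≠ (r0 : V × V).1 := by
      intro h
      apply hloop (r0 : V × V).1
      have h2 : ((r0 : V × V).1, (r0 : V × V).1) = (r0 : V × V) := by
        rw [← Prod.mk.eta (p := (r0 : V × V)), h]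
      rw [h2]
      exact r0.2
    refine ⟨⟨(fun v => if v = (r0 : V × V).1 then (SemidirectProduct.rightHom w).1
          else if v = (r0 : V × V).2 then (SemidirectProduct.rightHom w).2 else 1,
        fun r => if r = r0 then w else SemidirectProduct.inr
          (if (r : V × V).1 = (r0 : V × V).1 then (SemidirectProduct.rightHom w).1
            else if (r : V × V).1 = (r0 : V × V).2 then (SemidirectProduct.rightHom w).2 else 1,
           if (r : V × V).2 = (r0 : V × V).1 then (SemidirectProduct.rightHom w).1
            else if (r : V × V).2 = (r0 : V × V).2 then (SemidirectProduct.rightHom w).2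
            else 1)), ?_⟩, ?_⟩
    · intro r
      dsimp only
      by_cases hr : r = r0
      · subst hr
        simp [hne]
      · rw [if_neg hr, SemidirectProduct.rightHom_inr]
    · show (if r0 = r0 then w else _) = w
      rw [if_pos rfl]
  -- main argument
  rw [eq_bot_iff]
  intro x hx
  rw [Subgroup.mem_bot]
  have hvert : ∀ v, (x : (V → DihedralGroup p) × (R → Wgrp p q)).1 v = 1 := by
    intro v
    have m1 := frattiniOpen_le_comap (vProj p q V R v) (hvc v) (hvs v)
      (N := (dihedralSign p).ker) (by rw [hker_idx]; exact Nat.prime_two) hx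
    have m2 := frattiniOpen_le_comap (vProj p q V R v) (hvc v) (hvs v)
      (N := Subgroup.zpowers (DihedralGroup.sr 0)) (by rw [hS0_idx]; exact hp) hx
    rw [Subgroup.mem_comap, MonoidHom.mem_ker] at m1
    rw [Subgroup.mem_comap] at m2
    have m1' : dihedralSign p ((x : (V → DihedralGroup p) × (R → Wgrp p q)).1 v) = 1 := m1
    have m2' : ((x : (V → DihedralGroup p) × (R → Wgrp p q)).1 v)
        ∈ Subgroup.zpowers (DihedralGroup.sr 0 : DihedralGroup p) := m2
    cases hval : (x : (V → DihedralGroup p) × (R → Wgrp p q)).1 v with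
    | r i =>
      rw [hval] at m2'
      rw [hzp i m2', ← DihedralGroup.one_def]
    | sr i =>
      rw [hval] at m1'
      have hm : dihedralSign p (DihedralGroup.sr i) = -1 := rfl
      rw [hm] at m1'
      exact absurd m1' (by decide)
  have hedge : ∀ r : R, (x : (V → DihedralGroup p) × (R → Wgrp p q)).2 r = 1 := by
    intro r
    have m3 := frattiniOpen_le_comap (eProj p q V R r) (hec r) (hes r)
      (N := (SemidirectProduct.inr : (DihedralGroup p × DihedralGroup p) →* Wgrp p q).range)
      (by rw [hinr_idx]; exact hq) hx
    rw [Subgroup.mem_comap, MonoidHom.mem_range] at m3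
    obtain ⟨g, hg⟩ := m3
    have hleft : ((x : (V → DihedralGroup p) × (R → Wgrp p q)).2 r).left = 1 := by
      have h1 : (eProj p q V R r x).left = 1 := by rw [← hg]; rfl
      exact h1
    have hmem : ∀ s : R, SemidirectProduct.rightHom
        ((x : (V → DihedralGroup p) × (R → Wgrp p q)).2 s)
        = ((x : (V → DihedralGroup p) × (R → Wgrp p q)).1 (s : V × V).1,
           (x : (V → DihedralGroup p) × (R → Wgrp p q)).1 (s : V × V).2) := x.2
    have hright : ((x : (V → DihedralGroup p) × (R → Wgrp p q)).2 r).right = 1 := by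
      have h2 := hmem r
      rw [hvert, hvert] at h2
      exact h2
    exact SemidirectProduct.ext hleft hright
  have hx1 : (x : (V → DihedralGroup p) × (R → Wgrp p q)) = 1 := by
    refine Prod.ext ?_ ?_
    · funext v; exact hvert v
    · funext r; exact hedge r
  exact Subtype.ext hx1
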